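/- Let σ(x) := (1 + exp(−x))⁻¹ denote the logistic sigmoid. Then for all a, b ∈ ℝ: σ(a) · log(σ(a)/σ(b)) + σ(−a) · log(σ(−a)/σ(−b)) ≤ 2|a − b|. Equivalently (since σ(−x) = 1 − σ(x)), the Kullback–Leibler divergence between the Bernoulli distributions with success probabilities σ(a) and σ(b) is at most 2|a − b|. -/
import Mathlib

lemma sigmoid_log_ratio_le (a b : ℝ) :
    Real.log ((1 + Real.exp (-a))⁻¹ / (1 + Real.exp (-b))⁻¹) ≤ |a - b| := by
  have ha : (0:ℝ) < 1 + Real.exp (-a) := by positivity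
  have hb : (0:ℝ) < 1 + Real.exp (-b) := by positivity
  rw [inv_div_inv, Real.log_le_iff_le_exp (by positivity), div_le_iff₀ ha]
  rcases le_total b a with h | h
  · rw [abs_of_nonneg (by linarith)]
    have h1 : (1:ℝ) ≤ Real.exp (a - b) := Real.one_le_exp (by linarith)
    have h2 : Real.exp (a - b) * Real.exp (-a) = Real.exp (-b) := by
      rw [← Real.exp_add]; ring_nf
    nlinarith [Real.exp_pos (-a)]
  · rw [abs_of_nonpos (by linarith), neg_sub]
    have h1 : (1:ℝ) ≤ Real.exp (b - a) := Real.one_le_exp (by linarith)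
    have h2 : Real.exp (-b) ≤ Real.exp (-a) := Real.exp_le_exp.2 (by linarith)
    nlinarith [Real.exp_pos (-a), Real.exp_pos (-b)]

/-- With `σ(x) = (1 + exp(−x))⁻¹` the logistic sigmoid, the Kullback–Leibler divergence
between `Bernoulli(σ(a))` and `Bernoulli(σ(b))` is at most `2|a − b|`:
`σ(a) log(σ(a)/σ(b)) + σ(−a) log(σ(−a)/σ(−b)) ≤ 2|a − b|`
(the core estimate on `D_KL[p(w|z) ‖ p(w|z')]` in Lemmas 3 and 4(i) of CausalRFF). -/
theorem sigmoid_bernoulli_kl_le (a b : ℝ) :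
    (1 + Real.exp (-a))⁻¹ * Real.log ((1 + Real.exp (-a))⁻¹ / (1 + Real.exp (-b))⁻¹)
      + (1 + Real.exp (-(-a)))⁻¹ * Real.log ((1 + Real.exp (-(-a)))⁻¹ / (1 + Real.exp (-(-b)))⁻¹)
      ≤ 2 * |a - b| := by
  have ha : (0:ℝ) < 1 + Real.exp (-a) := by positivity
  have ha' : (0:ℝ) < 1 + Real.exp (-(-a)) := by positivity
  have hsum : (1 + Real.exp (-a))⁻¹ + (1 + Real.exp (-(-a)))⁻¹ = 1 := by
    have : Real.exp (-a) * Real.exp a = 1 := by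
      rw [← Real.exp_add]; simp
    field_simp
    nlinarith
  have h1 : (1 + Real.exp (-a))⁻¹ * Real.log ((1 + Real.exp (-a))⁻¹ / (1 + Real.exp (-b))⁻¹)
      ≤ (1 + Real.exp (-a))⁻¹ * |a - b| :=
    mul_le_mul_of_nonneg_left (sigmoid_log_ratio_le a b) (by positivity)
  have h2 : (1 + Real.exp (-(-a)))⁻¹ * Real.log ((1 + Real.exp (-(-a)))⁻¹ / (1 + Real.exp (-(-b)))⁻¹)
      ≤ (1 + Real.exp (-(-a)))⁻¹ * |a - b| := by
    have := mul_le_mul_of_nonneg_left (sigmoid_log_ratio_le (-a) (-b))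
      (le_of_lt (inv_pos.2 ha'))
    have habs : |-a - -b| = |a - b| := by
      rw [show -a - -b = -(a - b) by ring, abs_neg]
    rwa [habs] at this
  have h3 := add_le_add h1 h2
  calc _ ≤ (1 + Real.exp (-a))⁻¹ * |a - b| + (1 + Real.exp (-(-a)))⁻¹ * |a - b| := h3
    _ = 1 * |a - b| := by rw [← add_mul, hsum]
    _ ≤ 2 * |a - b| := by nlinarith [abs_nonneg (a - b)]
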